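/- In a port-labeled connected graph where each vertex v assigns distinct ports {0,...,deg(v)-1} to its incident edges, the standard DFS rule 'on entering via port p in explore state, exit via port (p+1) mod deg(v); backtrack when the exit port equals the entry/parent port' traverses every edge of the graph, i.e., visits every vertex, when run on a static graph. -/

import Mathlib

/-- A port-labeled simple graph: each vertex `v` has degree `deg v`, and its
incident edges are labeled by distinct ports `0, …, deg v - 1`.  `nxt v p` is
the neighbour of `v` reached through port `p`, and `rev v p` is the port
through which that neighbour sees `v` (the entry port at the other end). -/
structure PortGraph (V : Type*) where
  deg : V → ℕ
  nxt : V → ℕ → V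
  rev : V → ℕ → ℕ
  rev_lt : ∀ v p, p < deg v → rev v p < deg (nxt v p)
  nxt_rev : ∀ v p, p < deg v → nxt (nxt v p) (rev v p) = v
  rev_rev : ∀ v p, p < deg v → rev (nxt v p) (rev v p) = p
  nxt_ne : ∀ v p, p < deg v → nxt v p ≠ v
  nxt_inj : ∀ v p q, p < deg v → q < deg v → nxt v p = nxt v q → p = q

/-- The state of the DFS agent: current vertex, the port through which it
entered the current vertex, whether it is in the `explore` state (otherwise it
is backtracking), and for each visited vertex the recorded parent port. -/
structure DFSState (V : Type*) where
  cur : V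
  pin : ℕ
  explore : Bool
  parent : V → Option ℕ

/-- One step of the standard port-based DFS rule: at a newly visited vertex,
record the entry port as parent and exit via port `(pin+1) mod deg`
(switching to backtrack if the exit port equals the entry port); at an
already-visited vertex in explore state, immediately backtrack via the entry
port; in backtrack state, exit via `(pin+1) mod deg`, staying in backtrack
exactly when the exit port equals the parent port. -/
def dfsStep {V : Type*} [DecidableEq V] (P : PortGraph V) (s : DFSState V) :
    DFSState V :=
  let v := s.cur
  if s.explore then
    match s.parent v with
    | none =>
      let pout := (s.pin + 1) % P.deg v
      { cur := P.nxt v pout, pin := P.rev v pout,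
        explore := pout ≠ s.pin,
        parent := fun w => if w = v then some s.pin else s.parent w }
    | some _ =>
      { cur := P.nxt v s.pin, pin := P.rev v s.pin,
        explore := false, parent := s.parent }
  else
    let pout := (s.pin + 1) % P.deg v
    { cur := P.nxt v pout, pin := P.rev v pout,
      explore := s.parent v ≠ some pout, parent := s.parent }

/-- The run of the DFS agent from an initial state. -/
def dfsRun {V : Type*} [DecidableEq V] (P : PortGraph V) (s₀ : DFSState V) :
    ℕ → DFSState V
  | 0 => s₀
  | n + 1 => dfsStep P (dfsRun P s₀ (n + 1 - 1))


section
variable {V : Type*} [DecidableEq V] (P : PortGraph V) (s₀ : DFSState V)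

lemma run_succ (n : ℕ) : dfsRun P s₀ (n+1) = dfsStep P (dfsRun P s₀ n) := rfl

lemma step_some (s : DFSState V) (he : s.explore = true) {x : ℕ} (hp : s.parent s.cur = some x) :
    dfsStep P s = ⟨P.nxt s.cur s.pin, P.rev s.cur s.pin, false, s.parent⟩ := by
  simp [dfsStep, he, hp]

lemma step_none (s : DFSState V) (he : s.explore = true) (hp : s.parent s.cur = none) :
    dfsStep P s = ⟨P.nxt s.cur ((s.pin + 1) % P.deg s.cur),
      P.rev s.cur ((s.pin + 1) % P.deg s.cur),
      decide ((s.pin + 1) % P.deg s.cur ≠ s.pin),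
      fun w => if w = s.cur then some s.pin else s.parent w⟩ := by
  simp [dfsStep, he, hp]

lemma step_back (s : DFSState V) (he : s.explore = false) :
    dfsStep P s = ⟨P.nxt s.cur ((s.pin + 1) % P.deg s.cur),
      P.rev s.cur ((s.pin + 1) % P.deg s.cur),
      decide (s.parent s.cur ≠ some ((s.pin + 1) % P.deg s.cur)),
      s.parent⟩ := by
  simp [dfsStep, he]
end

section
variable {V : Type*} [DecidableEq V] {P : PortGraph V} {s₀ : DFSState V}

lemma pin_valid (hdeg : ∀ v, 0 < P.deg v) (h0 : s₀.pin < P.deg s₀.cur) :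
    ∀ n, (dfsRun P s₀ n).pin < P.deg ((dfsRun P s₀ n).cur) := by
  intro n
  induction n with
  | zero => exact h0
  | succ n ih =>
    rw [run_succ]
    set s := dfsRun P s₀ n with hs
    have hpo : (s.pin + 1) % P.deg s.cur < P.deg s.cur := Nat.mod_lt _ (hdeg _)
    by_cases he : s.explore = true
    · cases hp : s.parent s.cur with
      | none => rw [step_none P s he hp]; exact P.rev_lt _ _ hpo
      | some x => rw [step_some P s he hp]; exact P.rev_lt _ _ ih
    · rw [step_back P s (by simpa using he)]; exact P.rev_lt _ _ hpo

lemma parent_mono_step {n : ℕ} {v : V} {x : ℕ}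
    (h : (dfsRun P s₀ n).parent v = some x) :
    (dfsRun P s₀ (n + 1)).parent v = some x := by
  rw [run_succ]
  set s := dfsRun P s₀ n with hs
  by_cases he : s.explore = true
  · cases hp : s.parent s.cur with
    | none =>
      rw [step_none P s he hp]
      by_cases hv : v = s.cur
      · rw [hv] at h; rw [hp] at h; exact absurd h (by simp)
      · simpa [hv] using h
    | some y => rw [step_some P s he hp]; exact h
  · rw [step_back P s (by simpa using he)]; exact h

lemma parent_mono {n m : ℕ} (hnm : n ≤ m) {v : V} {x : ℕ}
    (h : (dfsRun P s₀ n).parent v = some x) :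
    (dfsRun P s₀ m).parent v = some x := by
  induction m with
  | zero => exact (by omega : n = 0) ▸ h
  | succ m ih =>
    rcases Nat.lt_or_ge n (m+1) with h1 | h1
    · exact parent_mono_step (ih (by omega))
    · have : n = m + 1 := by omega
      exact this ▸ h

end
section
variable {V : Type*} [Fintype V] [DecidableEq V] {P : PortGraph V} {s₀ : DFSState V}

/-- number of unvisited vertices at time n -/
noncomputable def unvis (P : PortGraph V) (s₀ : DFSState V) (n : ℕ) : ℕ :=
  (Finset.univ.filter (fun u => (dfsRun P s₀ n).parent u = none)).card

lemma unvis_filter_mono {n m : ℕ} (hnm : n ≤ m) :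
    (Finset.univ.filter (fun u => (dfsRun P s₀ m).parent u = none)) ⊆
      (Finset.univ.filter (fun u => (dfsRun P s₀ n).parent u = none)) := by
  intro u hu
  simp only [Finset.mem_filter, Finset.mem_univ, true_and] at hu ⊢
  cases h : (dfsRun P s₀ n).parent u with
  | none => rfl
  | some x => rw [parent_mono hnm h] at hu; exact absurd hu (by simp)

lemma unvis_mono {n m : ℕ} (hnm : n ≤ m) : unvis P s₀ m ≤ unvis P s₀ n :=
  Finset.card_le_card (unvis_filter_mono hnm)

lemma unvis_lt {n : ℕ} {w : V} {x : ℕ} (h1 : (dfsRun P s₀ n).parent w = none)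
    (h2 : (dfsRun P s₀ (n+1)).parent w = some x) :
    unvis P s₀ (n+1) < unvis P s₀ n := by
  apply Finset.card_lt_card
  constructor
  · exact unvis_filter_mono (by omega)
  · intro hsub
    have hw : w ∈ Finset.univ.filter (fun u => (dfsRun P s₀ n).parent u = none) := by
      simp [h1]
    have := hsub hw
    simp [h2] at this

omit [Fintype V] in
lemma parent_origin (h0 : ∀ v, s₀.parent v = none) {n : ℕ} {v : V}
    (h : (dfsRun P s₀ n).parent v ≠ none) :
    ∃ m, (dfsRun P s₀ m).cur = v ∧ (dfsRun P s₀ m).explore = true ∧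
      (dfsRun P s₀ m).parent v = none := by
  induction n with
  | zero => exact absurd (h0 v) h
  | succ n ih =>
    by_cases hn : (dfsRun P s₀ n).parent v = none
    · -- it was set at step n
      rw [run_succ] at h
      set s := dfsRun P s₀ n with hs
      by_cases he : s.explore = true
      · cases hp : s.parent s.cur with
        | none =>
          rw [step_none P s he hp] at h
          by_cases hv : v = s.cur
          · exact ⟨n, hv.symm, he, hv ▸ hn⟩
          · simp only [hv, if_false, ite_false] at h
            exact absurd hn h
        | some y =>
          rw [step_some P s he hp] at h
          exact absurd hn h
      · rw [step_back P s (by simpa using he)] at h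
        exact absurd hn h
    · exact ih hn
end
section
set_option linter.unusedSectionVars false
set_option maxHeartbeats 1000000
variable {V : Type*} [Fintype V] [DecidableEq V] {P : PortGraph V} {s₀ : DFSState V}

/-- If the agent is at `w` in explore mode having entered via port `q`, it
eventually crosses the edge `(w,q)` back towards `nxt w q` in backtrack mode. -/
lemma return_lemma :
    ∀ N n (w : V) (q : ℕ), unvis P s₀ n ≤ N → (dfsRun P s₀ n).explore = true →
      (dfsRun P s₀ n).cur = w → (dfsRun P s₀ n).pin = q → q < P.deg w →
      ∃ m, n < m ∧ (dfsRun P s₀ m).cur = P.nxt w q ∧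
        (dfsRun P s₀ m).pin = P.rev w q ∧ (dfsRun P s₀ m).explore = false := by
  intro N
  induction N using Nat.strong_induction_on with
  | _ N IH =>
  intro n w q hcount hex hcur hpin hq
  have hdegpos : 0 < P.deg w := lt_of_le_of_lt (Nat.zero_le _) hq
  cases hpw : (dfsRun P s₀ n).parent w with
  | some x =>
    refine ⟨n + 1, by omega, ?_⟩
    rw [run_succ, step_some P _ hex (by rw [hcur]; exact hpw)]
    simp [hcur, hpin]
  | none =>
    have hstep := step_none P _ hex (by rw [hcur]; exact hpw)
    by_cases hpq : (q + 1) % P.deg w = q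
    · refine ⟨n + 1, by omega, ?_⟩
      rw [run_succ, hstep]
      simp [hcur, hpin, hpq]
    · -- excursion case
      have hdeg2 : 2 ≤ P.deg w := by
        rcases Nat.lt_or_ge (P.deg w) 2 with h | h
        · have h1 : P.deg w = 1 := by omega
          have : q = 0 := by omega
          rw [this, h1] at hpq; simp at hpq
        · exact h
      set pout := (q + 1) % P.deg w with hpoutdef
      have hpout : pout < P.deg w := Nat.mod_lt _ hdegpos
      -- state at n+1
      have hc1 : (dfsRun P s₀ (n+1)).cur = P.nxt w pout := by rw [run_succ, hstep]; simp [hcur, hpin]; rfl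
      have hp1 : (dfsRun P s₀ (n+1)).pin = P.rev w pout := by rw [run_succ, hstep]; simp [hcur, hpin]; rfl
      have he1 : (dfsRun P s₀ (n+1)).explore = true := by
        rw [run_succ, hstep]; simpa [hcur, hpin] using hpq
      have hpar1 : (dfsRun P s₀ (n+1)).parent w = some q := by
        rw [run_succ, hstep]; simp [hcur, hpin]
      have hltN : unvis P s₀ (n+1) < N :=
        lt_of_lt_of_le (unvis_lt hpw hpar1) hcount
      -- the inner loop over remaining ports of w
      have inner : ∀ d p m, n < m → 1 ≤ d → d < P.deg w → (p + d) % P.deg w = q →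
          p < P.deg w → (dfsRun P s₀ m).cur = w → (dfsRun P s₀ m).pin = p →
          (dfsRun P s₀ m).explore = false → (dfsRun P s₀ m).parent w = some q →
          ∃ m', m < m' ∧ (dfsRun P s₀ m').cur = P.nxt w q ∧
            (dfsRun P s₀ m').pin = P.rev w q ∧ (dfsRun P s₀ m').explore = false := by
        intro d
        induction d with
        | zero => omega
        | succ d ihd =>
          intro p m hm h1 hd hmod hp hcur' hpin' hex' hpar'
          have hstep' := step_back P (dfsRun P s₀ m) (by simpa using hex')
          set pout' := (p + 1) % P.deg w with hpout'def
          have hpo'lt : pout' < P.deg w := Nat.mod_lt _ hdegpos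
          by_cases hq' : pout' = q
          · refine ⟨m + 1, by omega, ?_⟩
            rw [run_succ, hstep']
            simp only [hcur', hpin']
            rw [← hpout'def, hq', hpar']
            simp
          · -- d ≥ 1
            have hd1 : 1 ≤ d := by
              rcases Nat.eq_zero_or_pos d with h | h
              · rw [h] at hmod; exact absurd hmod hq'
              · exact h
            have hc2 : (dfsRun P s₀ (m+1)).cur = P.nxt w pout' := by
              rw [run_succ, hstep']; simp [hcur', hpin']; rfl
            have hp2 : (dfsRun P s₀ (m+1)).pin = P.rev w pout' := by
              rw [run_succ, hstep']; simp [hcur', hpin']; rfl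
            have he2 : (dfsRun P s₀ (m+1)).explore = true := by
              rw [run_succ, hstep']
              simp only [hcur', hpin']
              rw [← hpout'def, hpar']
              simp only [ne_eq, Option.some.injEq, decide_eq_true_eq]
              exact fun h => hq' h.symm
            have hcount2 : unvis P s₀ (m+1) < N :=
              lt_of_le_of_lt (unvis_mono (by omega : n + 1 ≤ m + 1)) hltN
            obtain ⟨m₂, hm₂, hc₂, hp₂, he₂⟩ :=
              IH (unvis P s₀ (m+1)) hcount2 (m+1) (P.nxt w pout') (P.rev w pout')
                le_rfl he2 hc2 hp2 (P.rev_lt _ _ hpo'lt)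
            rw [P.nxt_rev _ _ hpo'lt] at hc₂
            rw [P.rev_rev _ _ hpo'lt] at hp₂
            have hpar₂ : (dfsRun P s₀ m₂).parent w = some q :=
              parent_mono (by omega) hpar'
            have hmod₂ : (pout' + d) % P.deg w = q := by
              rw [hpout'def, Nat.mod_add_mod]
              rw [show p + 1 + d = p + (d + 1) by omega]
              exact hmod
            obtain ⟨m', hm', rest⟩ :=
              ihd pout' m₂ (by omega) hd1 (by omega) hmod₂ hpo'lt hc₂ hp₂ he₂ hpar₂
            exact ⟨m', by omega, rest⟩
      -- first excursion, then the inner loop starting at port pout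
      obtain ⟨m₁, hm₁, hc₁, hp₁, he₁⟩ :=
        IH (unvis P s₀ (n+1)) hltN (n+1) (P.nxt w pout) (P.rev w pout)
          le_rfl he1 hc1 hp1 (P.rev_lt _ _ hpout)
      rw [P.nxt_rev _ _ hpout] at hc₁
      rw [P.rev_rev _ _ hpout] at hp₁
      have hpar₁ : (dfsRun P s₀ m₁).parent w = some q := parent_mono (by omega) hpar1
      have hmod₁ : (pout + (P.deg w - 1)) % P.deg w = q := by
        rw [hpoutdef, Nat.mod_add_mod]
        rw [show q + 1 + (P.deg w - 1) = q + P.deg w by omega]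
        rw [Nat.add_mod_right]
        exact Nat.mod_eq_of_lt hq
      obtain ⟨m', hm', rest⟩ :=
        inner (P.deg w - 1) pout m₁ (by omega) (by omega) (by omega) hmod₁ hpout
          hc₁ hp₁ he₁ hpar₁
      exact ⟨m', by omega, rest⟩
end
section
set_option linter.unusedSectionVars false
set_option maxHeartbeats 1000000
variable {V : Type*} [Fintype V] [DecidableEq V] {P : PortGraph V} {s₀ : DFSState V}

/-- From a backtrack state at `w` with recorded parent port `q`, the agent
exits through all ports strictly between the current one and `q` (cyclically). -/
lemma cycle_lemma :
    ∀ d m (w : V) (p q : ℕ), 1 ≤ d → d < P.deg w → (p + d) % P.deg w = q →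
      p < P.deg w → (dfsRun P s₀ m).cur = w → (dfsRun P s₀ m).pin = p →
      (dfsRun P s₀ m).explore = false → (dfsRun P s₀ m).parent w = some q →
      ∀ j, 1 ≤ j → j ≤ d → ∃ m', (dfsRun P s₀ m').cur = P.nxt w ((p + j) % P.deg w) := by
  intro d
  induction d with
  | zero => omega
  | succ d ihd =>
    intro m w p q h1 hd hmod hp hcur hpin hex hpar j hj1 hjd
    have hdegpos : 0 < P.deg w := lt_of_le_of_lt (Nat.zero_le _) hp
    have hstep := step_back P (dfsRun P s₀ m) (by simpa using hex)
    set pout := (p + 1) % P.deg w with hpoutdef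
    have hpolt : pout < P.deg w := Nat.mod_lt _ hdegpos
    have hc1 : (dfsRun P s₀ (m+1)).cur = P.nxt w pout := by
      rw [run_succ, hstep]; simp [hcur, hpin]; rfl
    rcases Nat.eq_or_lt_of_le hj1 with hj | hj
    · exact ⟨m + 1, by rw [hc1, hpoutdef, ← hj]⟩
    · -- j ≥ 2, so pout ≠ q and we recurse
      have hq' : pout ≠ q := by
        intro hcon
        -- then d + 1 ≡ 1 mod deg w, both < deg w, so d + 1 = 1, i.e. d = 0,
        -- contradicting j ≤ d + 1 and 2 ≤ j unless d ≥ 1; but then deg ∣ d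
        have h1' : (p + 1) % P.deg w = (p + (d+1)) % P.deg w := by
          rw [← hpoutdef, hcon, ← hmod]
        have : (1 : ℕ) % P.deg w = (d+1) % P.deg w := by
          have := Nat.ModEq.add_left_cancel' p (h1' : (p+1) % P.deg w = (p+(d+1)) % P.deg w)
          exact this
        rw [Nat.mod_eq_of_lt hd] at this
        have hdeg2 : 1 < P.deg w := lt_of_le_of_lt (by omega : 1 ≤ d + 1) hd
        rw [Nat.mod_eq_of_lt hdeg2] at this
        omega
      have hp1 : (dfsRun P s₀ (m+1)).pin = P.rev w pout := by
        rw [run_succ, hstep]; simp [hcur, hpin]; rfl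
      have he1 : (dfsRun P s₀ (m+1)).explore = true := by
        rw [run_succ, hstep]
        simp only [hcur, hpin]
        rw [← hpoutdef, hpar]
        simp only [ne_eq, Option.some.injEq, decide_eq_true_eq]
        exact fun h => hq' h.symm
      obtain ⟨m₂, hm₂, hc₂, hp₂, he₂⟩ :=
        return_lemma (unvis P s₀ (m+1)) (m+1) (P.nxt w pout) (P.rev w pout)
          le_rfl he1 hc1 hp1 (P.rev_lt _ _ hpolt)
      rw [P.nxt_rev _ _ hpolt] at hc₂
      rw [P.rev_rev _ _ hpolt] at hp₂
      have hpar₂ : (dfsRun P s₀ m₂).parent w = some q := parent_mono (by omega) hpar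
      have hd1 : 1 ≤ d := by
        rcases Nat.eq_zero_or_pos d with h | h
        · rw [h] at hmod; exact absurd hmod hq'
        · exact h
      have hmod₂ : (pout + d) % P.deg w = q := by
        rw [hpoutdef, Nat.mod_add_mod, show p + 1 + d = p + (d+1) by omega]
        exact hmod
      obtain ⟨m', hm'⟩ := ihd m₂ w pout q hd1 (by omega) hmod₂ hpolt hc₂ hp₂ he₂ hpar₂
        (j - 1) (by omega) (by omega)
      refine ⟨m', ?_⟩
      rw [hm']
      congr 1
      rw [hpoutdef, Nat.mod_add_mod, show p + 1 + (j - 1) = p + j by omega]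

/-- If the agent is at an unvisited vertex `w` in explore mode, every
neighbour of `w` is eventually visited. -/
lemma explore_case {n : ℕ} {w : V} {q : ℕ}
    (hcur : (dfsRun P s₀ n).cur = w) (hex : (dfsRun P s₀ n).explore = true)
    (hpin : (dfsRun P s₀ n).pin = q) (hq : q < P.deg w)
    (hpw : (dfsRun P s₀ n).parent w = none) :
    ∀ p, p < P.deg w → ∃ m, (dfsRun P s₀ m).cur = P.nxt w p := by
  intro p hp
  have hdegpos : 0 < P.deg w := lt_of_le_of_lt (Nat.zero_le _) hq
  have hstep := step_none P _ hex (by rw [hcur]; exact hpw)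
  set pout := (q + 1) % P.deg w with hpoutdef
  have hpolt : pout < P.deg w := Nat.mod_lt _ hdegpos
  have hc1 : (dfsRun P s₀ (n+1)).cur = P.nxt w pout := by
    rw [run_succ, hstep]; simp [hcur, hpin]; rfl
  by_cases hpq : pout = q
  · -- deg w = 1
    have heq : (q + 1) % P.deg w = q := by rw [← hpoutdef, hpq]
    have hdeg1 : P.deg w = 1 := by
      rcases Nat.lt_or_ge (q+1) (P.deg w) with h | h
      · rw [Nat.mod_eq_of_lt h] at heq; omega
      · have hqd : q + 1 = P.deg w := by omega
        rw [hqd, Nat.mod_self] at heq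
        omega
    have : p = q := by omega
    exact ⟨n + 1, by rw [hc1, hpq, this]⟩
  · -- general case, deg w ≥ 2
    -- the port p is (q + i) % deg w for some i with 1 ≤ i ≤ deg w
    obtain ⟨i, hi1, hideg, hieq⟩ : ∃ i, 1 ≤ i ∧ i ≤ P.deg w ∧ (q + i) % P.deg w = p := by
      rcases Nat.lt_or_ge q p with h | h
      · exact ⟨p - q, by omega, by omega, by rw [show q + (p - q) = p by omega,
          Nat.mod_eq_of_lt hp]⟩
      · refine ⟨p + P.deg w - q, by omega, by omega, ?_⟩
        rw [show q + (p + P.deg w - q) = p + P.deg w by omega, Nat.add_mod_right,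
          Nat.mod_eq_of_lt hp]
    rcases Nat.eq_or_lt_of_le hi1 with hi | hi
    · -- i = 1 : port pout itself
      refine ⟨n + 1, ?_⟩
      rw [hc1]
      congr 1
      rw [← hieq, ← hi, hpoutdef]
    · -- i ≥ 2 : use the cycle lemma after returning
      have hp1 : (dfsRun P s₀ (n+1)).pin = P.rev w pout := by
        rw [run_succ, hstep]; simp [hcur, hpin]; rfl
      have he1 : (dfsRun P s₀ (n+1)).explore = true := by
        rw [run_succ, hstep]; simpa [hcur, hpin] using hpq
      have hpar1 : (dfsRun P s₀ (n+1)).parent w = some q := by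
        rw [run_succ, hstep]; simp [hcur, hpin]
      obtain ⟨m₁, hm₁, hc₁, hp₁, he₁⟩ :=
        return_lemma (unvis P s₀ (n+1)) (n+1) (P.nxt w pout) (P.rev w pout)
          le_rfl he1 hc1 hp1 (P.rev_lt _ _ hpolt)
      rw [P.nxt_rev _ _ hpolt] at hc₁
      rw [P.rev_rev _ _ hpolt] at hp₁
      have hpar₁ : (dfsRun P s₀ m₁).parent w = some q := parent_mono (by omega) hpar1
      have hdeg2 : 2 ≤ P.deg w := by
        rcases Nat.lt_or_ge (P.deg w) 2 with h | h
        · exfalso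
          have h1 : P.deg w = 1 := by omega
          have hq0 : q = 0 := by omega
          apply hpq
          rw [hpoutdef, h1, Nat.mod_one, hq0]
        · exact h
      have hmod : (pout + (P.deg w - 1)) % P.deg w = q := by
        rw [hpoutdef, Nat.mod_add_mod, show q + 1 + (P.deg w - 1) = q + P.deg w by omega,
          Nat.add_mod_right]
        exact Nat.mod_eq_of_lt hq
      obtain ⟨m', hm'⟩ := cycle_lemma (P.deg w - 1) m₁ w pout q (by omega) (by omega)
        hmod hpolt hc₁ hp₁ he₁ hpar₁ (i - 1) (by omega) (by omega)
      refine ⟨m', ?_⟩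
      rw [hm']
      congr 1
      rw [hpoutdef, Nat.mod_add_mod, show q + 1 + (i - 1) = q + i by omega, hieq]
end
section
set_option linter.unusedSectionVars false
set_option maxHeartbeats 1000000
variable {V : Type*} [Fintype V] [DecidableEq V] {P : PortGraph V} {s₀ : DFSState V}

lemma backtrack_case (hdeg : ∀ v, 0 < P.deg v) (h0par : ∀ v, s₀.parent v = none)
    (h0pin : s₀.pin < P.deg s₀.cur) {n : ℕ} {w : V} {q : ℕ}
    (hcur : (dfsRun P s₀ n).cur = w) (hex : (dfsRun P s₀ n).explore = false)
    (hpin : (dfsRun P s₀ n).pin = q) (hq : q < P.deg w)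
    (hpw : (dfsRun P s₀ n).parent w = none) :
    ∀ p, p < P.deg w → ∃ m, (dfsRun P s₀ m).cur = P.nxt w p := by
  have hdegpos : 0 < P.deg w := lt_of_le_of_lt (Nat.zero_le _) hq
  have K : ∀ k, (∃ m, n ≤ m ∧ (dfsRun P s₀ m).cur = w ∧
        (dfsRun P s₀ m).pin = (q + k) % P.deg w ∧ (dfsRun P s₀ m).explore = false ∧
        (dfsRun P s₀ m).parent w = none) ∨
      (∃ m', (dfsRun P s₀ m').cur = w ∧ (dfsRun P s₀ m').explore = true ∧
        (dfsRun P s₀ m').parent w = none) := by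
    intro k
    induction k with
    | zero =>
      left
      exact ⟨n, le_rfl, hcur, by rw [hpin]; simp [Nat.mod_eq_of_lt hq], hex, hpw⟩
    | succ k ihk =>
      rcases ihk with ⟨m, hnm, hc, hpk, hef, hpn⟩ | hr
      · set pk := (q + k) % P.deg w with hpkdef
        have hpklt : pk < P.deg w := Nat.mod_lt _ hdegpos
        have hstep := step_back P (dfsRun P s₀ m) (by simpa using hef)
        set pout := (pk + 1) % P.deg w with hpoutdef
        have hpout_eq : pout = (q + (k+1)) % P.deg w := by
          rw [hpoutdef, hpkdef, Nat.mod_add_mod, show q + k + 1 = q + (k+1) by omega]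
        have hpolt : pout < P.deg w := Nat.mod_lt _ hdegpos
        have hc1 : (dfsRun P s₀ (m+1)).cur = P.nxt w pout := by
          rw [run_succ, hstep]; simp [hc, hpk]; rfl
        have hp1 : (dfsRun P s₀ (m+1)).pin = P.rev w pout := by
          rw [run_succ, hstep]; simp [hc, hpk]; rfl
        have he1 : (dfsRun P s₀ (m+1)).explore = true := by
          rw [run_succ, hstep]
          simp only [hc, hpk]
          rw [← hpoutdef, hpn]
          simp
        obtain ⟨m₂, hm₂, hc₂, hp₂, he₂⟩ :=
          return_lemma (unvis P s₀ (m+1)) (m+1) (P.nxt w pout) (P.rev w pout)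
            le_rfl he1 hc1 hp1 (P.rev_lt _ _ hpolt)
        rw [P.nxt_rev _ _ hpolt] at hc₂
        rw [P.rev_rev _ _ hpolt] at hp₂
        cases hpn₂ : (dfsRun P s₀ m₂).parent w with
        | none =>
          left
          exact ⟨m₂, by omega, hc₂, by rw [hp₂, hpout_eq], he₂, hpn₂⟩
        | some x =>
          right
          have hne : (dfsRun P s₀ m₂).parent w ≠ none := by rw [hpn₂]; simp
          exact parent_origin h0par hne
      · right; exact hr
  intro p hp
  set k := P.deg w - q - 1 + p with hkdef
  have hk : (q + k + 1) % P.deg w = p := by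
    rw [show q + k + 1 = P.deg w + p by omega, Nat.add_mod_left,
      Nat.mod_eq_of_lt hp]
  rcases K k with ⟨m, hnm, hc, hpk, hef, hpn⟩ | ⟨m', hcw, hex', hpn'⟩
  · have hstep := step_back P (dfsRun P s₀ m) (by simpa using hef)
    refine ⟨m + 1, ?_⟩
    rw [run_succ, hstep]
    simp only [hc, hpk]
    congr 1
    rw [Nat.mod_add_mod]
    exact hk
  · have hb : (dfsRun P s₀ m').pin < P.deg w := by
      have := pin_valid hdeg h0pin m'
      rwa [hcw] at this
    exact explore_case hcw hex' rfl hb hpn' p hp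

lemma reached_next (hdeg : ∀ v, 0 < P.deg v) (h0par : ∀ v, s₀.parent v = none)
    (h0pin : s₀.pin < P.deg s₀.cur) {n : ℕ} {v : V}
    (hcur : (dfsRun P s₀ n).cur = v) :
    ∀ p, p < P.deg v → ∃ m, (dfsRun P s₀ m).cur = P.nxt v p := by
  have hb : ∀ m, (dfsRun P s₀ m).cur = v → (dfsRun P s₀ m).pin < P.deg v := by
    intro m hm
    have := pin_valid hdeg h0pin m
    rwa [hm] at this
  cases hp : (dfsRun P s₀ n).parent v with
  | some x =>
    have hne : (dfsRun P s₀ n).parent v ≠ none := by rw [hp]; simp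
    obtain ⟨m', hc, he, hpn⟩ := parent_origin h0par hne
    exact explore_case hc he rfl (hb m' hc) hpn
  | none =>
    cases he : (dfsRun P s₀ n).explore with
    | true => exact explore_case hcur he rfl (hb n hcur) hp
    | false => exact backtrack_case hdeg h0par h0pin hcur he rfl (hb n hcur) hp
end

/-- On a finite connected port-labeled static graph, the standard DFS rule
started at a root `r` (with first exit port `0`) visits every vertex. -/
theorem dfs_visits_all {V : Type*} [Fintype V] [DecidableEq V]
    (P : PortGraph V) (hdeg : ∀ v, 0 < P.deg v)
    (hconn : ∀ r v : V, Relation.ReflTransGen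
      (fun a b => ∃ p, p < P.deg a ∧ P.nxt a p = b) r v)
    (r : V) :
    ∀ v : V, ∃ n : ℕ,
      (dfsRun P ⟨r, P.deg r - 1, true, fun _ => none⟩ n).cur = v := by
  set s₀ : DFSState V := ⟨r, P.deg r - 1, true, fun _ => none⟩ with hs₀
  have h0par : ∀ v, s₀.parent v = none := fun _ => rfl
  have h0pin : s₀.pin < P.deg s₀.cur := by
    show P.deg r - 1 < P.deg r
    have := hdeg r
    omega
  intro v
  have h := hconn r v
  induction h with
  | refl => exact ⟨0, rfl⟩
  | tail hab hbc ih =>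
    obtain ⟨n, hn⟩ := ih
    obtain ⟨p, hp, hnx⟩ := hbc
    obtain ⟨m, hm⟩ := reached_next hdeg h0par h0pin hn p hp
    exact ⟨m, by rw [hm, hnx]⟩
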